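/- For a numerical semigroup S, the smallest arithmetic variety containing {S} is exactly the set of arithmetic extensions of S. -/
import Mathlib


/-- A numerical semigroup: a submonoid of (ℕ,+) with finite complement. -/
def IsNumericalSemigroup (S : Set ℕ) : Prop :=
  0 ∈ S ∧ (∀ a ∈ S, ∀ b ∈ S, a + b ∈ S) ∧ Sᶜ.Finite

/-- The quotient S/d = {x ∈ ℕ : d*x ∈ S}. -/
def NumQuot (S : Set ℕ) (d : ℕ) : Set ℕ := {x | d * x ∈ S}

/-- The Frobenius number of S (for S ≠ ℕ): the maximum of the complement. -/
noncomputable def frob (S : Set ℕ) : ℕ := sSup Sᶜ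

/-- The multiplicity of S: the least positive element. -/
noncomputable def mult (S : Set ℕ) : ℕ := sInf (S \ {0})

/-- T is an arithmetic extension of S if T = {x : d₁x,...,dₙx ∈ S} for some
positive integers d₁,...,dₙ. -/
def IsArithmeticExtension (S T : Set ℕ) : Prop :=
  ∃ D : Finset ℕ, D.Nonempty ∧ (∀ d ∈ D, 0 < d) ∧ T = {x | ∀ d ∈ D, d * x ∈ S}

/-- An arithmetic variety: a nonempty family of numerical semigroups closed under
pairwise intersections and arithmetic extensions. -/
def IsArithmeticVariety (𝒜 : Set (Set ℕ)) : Prop :=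
  𝒜.Nonempty ∧ (∀ S ∈ 𝒜, IsNumericalSemigroup S) ∧
    (∀ S ∈ 𝒜, ∀ T ∈ 𝒜, S ∩ T ∈ 𝒜) ∧
    (∀ S ∈ 𝒜, ∀ T : Set ℕ, IsArithmeticExtension S T → T ∈ 𝒜)


lemma self_ext (S : Set ℕ) : IsArithmeticExtension S S := by
  refine ⟨{1}, ⟨1, by simp⟩, by simp, ?_⟩
  ext x; simp

lemma ext_ns (S : Set ℕ) (hS : IsNumericalSemigroup S) (T : Set ℕ)
    (hT : IsArithmeticExtension S T) : IsNumericalSemigroup T := by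
  obtain ⟨D, hne, hpos, rfl⟩ := hT
  obtain ⟨h0, hadd, hfin⟩ := hS
  refine ⟨fun d hd => by simpa using h0, ?_, ?_⟩
  · intro a ha b hb d hd
    rw [Nat.mul_add]; exact hadd _ (ha d hd) _ (hb d hd)
  · apply Set.Finite.subset (Set.finite_Iic (sSup Sᶜ))
    intro x hx
    simp only [Set.mem_compl_iff, Set.mem_setOf_eq, not_forall] at hx
    obtain ⟨d, hd, hdx⟩ := hx
    have h1 : d * x ≤ sSup Sᶜ := le_csSup (Set.Finite.bddAbove hfin) hdx
    exact le_trans (Nat.le_mul_of_pos_left x (hpos d hd)) h1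

lemma ext_inter (S T₁ T₂ : Set ℕ) (h1 : IsArithmeticExtension S T₁)
    (h2 : IsArithmeticExtension S T₂) : IsArithmeticExtension S (T₁ ∩ T₂) := by
  obtain ⟨D₁, hn1, hp1, rfl⟩ := h1
  obtain ⟨D₂, hn2, hp2, rfl⟩ := h2
  refine ⟨D₁ ∪ D₂, by simp [Finset.Nonempty] at hn1 ⊢; exact ⟨hn1.choose, Or.inl hn1.choose_spec⟩,
    ?_, ?_⟩
  · intro d hd; rcases Finset.mem_union.1 hd with h | h
    exacts [hp1 d h, hp2 d h]
  · ext x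
    simp only [Set.mem_inter_iff, Set.mem_setOf_eq, Finset.mem_union]
    constructor
    · rintro ⟨ha, hb⟩ d (h | h); exacts [ha d h, hb d h]
    · intro h; exact ⟨fun d hd => h d (Or.inl hd), fun d hd => h d (Or.inr hd)⟩

lemma ext_trans (S T U : Set ℕ) (h1 : IsArithmeticExtension S T)
    (h2 : IsArithmeticExtension T U) : IsArithmeticExtension S U := by
  obtain ⟨D, hn1, hp1, rfl⟩ := h1
  obtain ⟨E, hn2, hp2, rfl⟩ := h2
  refine ⟨(D ×ˢ E).image (fun p => p.1 * p.2), ?_, ?_, ?_⟩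
  · obtain ⟨d, hd⟩ := hn1; obtain ⟨e, he⟩ := hn2
    exact ⟨d * e, Finset.mem_image.2 ⟨(d, e), Finset.mem_product.2 ⟨hd, he⟩, rfl⟩⟩
  · intro f hf
    obtain ⟨⟨d, e⟩, hde, rfl⟩ := Finset.mem_image.1 hf
    obtain ⟨hd, he⟩ := Finset.mem_product.1 hde
    exact Nat.mul_pos (hp1 d hd) (hp2 e he)
  · ext x
    simp only [Set.mem_setOf_eq, Finset.mem_image, Finset.mem_product]
    constructor
    · rintro h f ⟨⟨d, e⟩, ⟨hd, he⟩, rfl⟩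
      have := h e he d hd
      show d * e * x ∈ S
      rwa [mul_assoc]
    · intro h e he d hd
      have := h (d * e) ⟨(d, e), ⟨hd, he⟩, rfl⟩
      rwa [mul_assoc] at this

theorem smallest_variety_eq_arithmeticExtensions (S : Set ℕ)
    (hS : IsNumericalSemigroup S) :
    ⋂₀ {𝒜 : Set (Set ℕ) | IsArithmeticVariety 𝒜 ∧ S ∈ 𝒜} =
      {T | IsArithmeticExtension S T} := by
  have hvar : IsArithmeticVariety {T | IsArithmeticExtension S T} ∧
      S ∈ {T | IsArithmeticExtension S T} := by
    refine ⟨⟨⟨S, self_ext S⟩, fun T hT => ext_ns S hS T hT,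
      fun T₁ h1 T₂ h2 => ext_inter S T₁ T₂ h1 h2,
      fun T hT U hU => ext_trans S T U hT hU⟩, self_ext S⟩
  apply Set.Subset.antisymm
  · exact Set.sInter_subset_of_mem hvar
  · intro T hT 𝒜 h𝒜
    obtain ⟨⟨_, _, _, hclosed⟩, hSmem⟩ := h𝒜
    exact hclosed S hSmem T hT
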